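/- Let s, t be coprime integers greater than 1. If a partition λ satisfies w_s(λ) < t or w_t(λ) < s, then λ is (s,t)-minimal, i.e. no partition of smaller size has the same s-core and t-core as λ. -/

import Mathlib

/-- A partition, given as a weakly decreasing finitely-supported sequence of
natural numbers (`parts 0` is the first part). -/
structure PartitionSeq where
  parts : ℕ →₀ ℕ
  antitone : ∀ ⦃i j : ℕ⦄, i ≤ j → parts j ≤ parts i

namespace PartitionSeq

/-- The size `|λ|` of a partition. -/
def size (l : PartitionSeq) : ℕ := l.parts.sum fun _ v => v

/-- The beta-set `β(λ) = { λ_r − r : r ≥ 1 }` (here 0-indexed). -/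
def betaSet (l : PartitionSeq) : Set ℤ :=
  Set.range fun r : ℕ => (l.parts r : ℤ) - (r + 1)

/-- `RemoveHook h l m` : `m` is obtained from `l` by removing a rim `h`-hook;
in beta-set terms, an element `b` of `β(l)` is replaced by `b − h ∉ β(l)`. -/
def RemoveHook (h : ℕ) (l m : PartitionSeq) : Prop :=
  ∃ b : ℤ, b ∈ l.betaSet ∧ b - (h : ℤ) ∉ l.betaSet ∧
    m.betaSet = insert (b - (h : ℤ)) (l.betaSet \ {b})

/-- `l` is an `s`-core: no rim `s`-hook can be removed. -/
def IsCore (s : ℕ) (l : PartitionSeq) : Prop := ∀ m : PartitionSeq, ¬ RemoveHook s l m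

/-- `c` is the `s`-core of `l`: it is obtained from `l` by repeatedly removing
rim `s`-hooks, and is itself an `s`-core. -/
def HasCore (s : ℕ) (l c : PartitionSeq) : Prop :=
  Relation.ReflTransGen (RemoveHook s) l c ∧ IsCore s c

/-- `IsConj l m` : `m` is the conjugate partition of `l`. -/
def IsConj (l m : PartitionSeq) : Prop :=
  ∀ r : ℕ, m.parts r = Set.ncard {c : ℕ | r + 1 ≤ l.parts c}

end PartitionSeq

/-- The region `U_x = { x + as + bt : a, b > 0 }`. -/
def UpSet (s t : ℕ) (x : ℤ) : Set ℤ :=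
  {n : ℤ | ∃ a b : ℕ, 0 < a ∧ 0 < b ∧ n = x + (a : ℤ) * s + (b : ℤ) * t}

/-- The region `L_x = { x − as − bt : a, b ≥ 0 }`. -/
def LowSet (s t : ℕ) (x : ℤ) : Set ℤ :=
  {n : ℤ | ∃ a b : ℕ, n = x - (a : ℤ) * s - (b : ℤ) * t}

/-- `x` is a pinch-point for `l` : `L_x ⊆ β(l)` and `β(l) ∩ U_x = ∅`. -/
def PinchPoint (s t : ℕ) (x : ℤ) (l : PartitionSeq) : Prop :=
  LowSet s t x ⊆ l.betaSet ∧ l.betaSet ∩ UpSet s t x = ∅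

/-- The generator `w_i` of the affine symmetric group `W_s` in its level-`t`
action on `ℤ` : `n ↦ n + t` if `n ≡ (i−1)t − (s−1)(t−1)/2 (mod s)`,
`n ↦ n − t` if `n ≡ it − (s−1)(t−1)/2 (mod s)`, and `n ↦ n` otherwise. -/
def wgen (s t : ℕ) (i : ℤ) : ℤ → ℤ := fun n =>
  if (s : ℤ) ∣ (n + ((s : ℤ) - 1) * ((t : ℤ) - 1) / 2 - (i - 1) * t) then n + t
  else if (s : ℤ) ∣ (n + ((s : ℤ) - 1) * ((t : ℤ) - 1) / 2 - i * t) then n - t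
  else n

/-- The monoid of maps `ℤ → ℤ` generated by the `wgen s t i`.  Since each
generator is an involution, this is the image of the level-`t` action
of the affine symmetric group `W_s` on `ℤ`. -/
def WMon (s t : ℕ) : Submonoid (Function.End ℤ) :=
  Submonoid.closure {f | ∃ i : ℤ, f = wgen s t i}

/-- `l` is `(s,t)`-minimal: no partition of smaller size has the same
`s`-core and `t`-core. -/
def MinimalPart (s t : ℕ) (l : PartitionSeq) : Prop :=
  ∀ (m σ τ : PartitionSeq), PartitionSeq.HasCore s l σ → PartitionSeq.HasCore t l τ →
    PartitionSeq.HasCore s m σ → PartitionSeq.HasCore t m τ → l.size ≤ m.size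

namespace StmtNine
open PartitionSeq Finset

/-- the beta function -/
def betaF (l : PartitionSeq) : ℕ → ℤ := fun r => (l.parts r : ℤ) - (r + 1)

lemma betaSet_eq (l : PartitionSeq) : l.betaSet = Set.range (betaF l) := rfl

lemma betaF_strictAnti (l : PartitionSeq) : StrictAnti (betaF l) := by
  apply strictAnti_nat_of_succ_lt
  intro n
  have h1 := l.antitone (Nat.le_succ n)
  have h2 : l.parts (n + 1) = l.parts n.succ := rfl
  simp only [betaF]
  push_cast
  omega

lemma betaF_ge (l : PartitionSeq) (r : ℕ) : -((r : ℤ) + 1) ≤ betaF l r := by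
  simp only [betaF]
  have : 0 ≤ (l.parts r : ℤ) := by positivity
  omega

/-- `N` is a bound for `l` -/
def Bnd (l : PartitionSeq) (N : ℕ) : Prop := ∀ r, N ≤ r → l.parts r = 0

lemma bnd_exists (l : PartitionSeq) : ∃ N, Bnd l N := by
  refine ⟨l.parts.support.sup id + 1, fun r hr => ?_⟩
  by_contra h
  have : r ∈ l.parts.support := Finsupp.mem_support_iff.2 h
  have h2 : id r ≤ l.parts.support.sup id := Finset.le_sup (f := id) this
  simp only [id] at h2
  omega

lemma bnd_mono {l : PartitionSeq} {N N' : ℕ} (h : Bnd l N) (hNN' : N ≤ N') : Bnd l N' :=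
  fun r hr => h r (le_trans hNN' hr)

lemma betaF_of_bnd {l : PartitionSeq} {N : ℕ} (h : Bnd l N) {r : ℕ} (hr : N ≤ r) :
    betaF l r = -((r : ℤ) + 1) := by
  simp [betaF, h r hr]

lemma low_mem {l : PartitionSeq} {N : ℕ} (h : Bnd l N) {x : ℤ} (hx : x < -(N : ℤ)) :
    x ∈ l.betaSet := by
  rw [betaSet_eq]
  refine ⟨(-x - 1).toNat, ?_⟩
  have h1 : (N : ℤ) ≤ -x - 1 := by omega
  have h2 : ((-x - 1).toNat : ℤ) = -x - 1 := Int.toNat_of_nonneg (by omega)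
  have h3 : N ≤ (-x - 1).toNat := by omega
  have h4 := betaF_of_bnd h h3
  omega

/-- the window of `l` of width `N` -/
noncomputable def Win (l : PartitionSeq) (N : ℕ) : Finset ℤ := (Finset.range N).image (betaF l)

lemma win_card (l : PartitionSeq) (N : ℕ) : (Win l N).card = N := by
  rw [Win, Finset.card_image_of_injective _ (betaF_strictAnti l).injective, Finset.card_range]

lemma win_coe {l : PartitionSeq} {N : ℕ} (h : Bnd l N) :
    (Win l N : Set ℤ) = l.betaSet ∩ {x | -(N : ℤ) ≤ x} := by
  ext x
  simp only [Win, Finset.coe_image, Finset.coe_range, Set.mem_image, Set.mem_Iio,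
    Set.mem_inter_iff, Set.mem_setOf_eq, betaSet_eq]
  constructor
  · rintro ⟨r, hr, rfl⟩
    refine ⟨⟨r, rfl⟩, ?_⟩
    have := betaF_ge l r
    omega
  · rintro ⟨⟨r, rfl⟩, hx⟩
    refine ⟨r, ?_, rfl⟩
    by_contra hr
    have : N ≤ r := by omega
    have := betaF_of_bnd h this
    omega

lemma mem_win {l : PartitionSeq} {N : ℕ} (h : Bnd l N) {x : ℤ} :
    x ∈ Win l N ↔ x ∈ l.betaSet ∧ -(N : ℤ) ≤ x := by
  have := win_coe h
  constructor
  · intro hx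
    have : x ∈ (Win l N : Set ℤ) := by exact_mod_cast hx
    rw [win_coe h] at this; exact this
  · intro hx
    have : x ∈ (Win l N : Set ℤ) := by rw [win_coe h]; exact hx
    exact_mod_cast this

lemma size_win {l : PartitionSeq} {N : ℕ} (h : Bnd l N) :
    (l.size : ℤ) = (Win l N).sum id + (Finset.range N).sum (fun r => (r : ℤ) + 1) := by
  have hsupp : l.parts.support ⊆ Finset.range N := by
    intro r hr
    rw [Finset.mem_range]
    by_contra hc
    exact (Finsupp.mem_support_iff.1 hr) (h r (by omega))
  have hsz : l.size = (Finset.range N).sum (fun r => l.parts r) :=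
    Finsupp.sum_of_support_subset _ hsupp _ (fun i _ => rfl)
  have hw : (Win l N).sum id = (Finset.range N).sum (betaF l) :=
    Finset.sum_image (fun a _ b _ hab => (betaF_strictAnti l).injective hab)
  rw [hsz, hw]
  push_cast
  rw [← Finset.sum_add_distrib]
  apply Finset.sum_congr rfl
  intro r _
  simp [betaF]

/-- construction of a partition from window data -/
lemma exists_partition (N : ℕ) (F : Finset ℤ) (hcard : F.card = N)
    (hge : ∀ x ∈ F, -(N : ℤ) ≤ x) :
    ∃ p : PartitionSeq, p.betaSet = ↑F ∪ {x : ℤ | x < -(N : ℤ)} := by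
  classical
  set iso := F.orderIsoOfFin hcard with hiso
  have hmemF : ∀ j : Fin N, (iso j : ℤ) ∈ F := fun j => (iso j).2
  have hisolin : ∀ j : ℕ, ∀ hj : j < N, ∀ h0 : 0 < N, (iso ⟨0, h0⟩ : ℤ) + j ≤ iso ⟨j, hj⟩ := by
    intro j
    induction j with
    | zero => intro hj h0; simp
    | succ k ih =>
      intro hj h0
      have hk : k < N := by omega
      have h1 := ih hk h0
      have h2 : (⟨k, hk⟩ : Fin N) < ⟨k + 1, hj⟩ := by simp [Fin.lt_def]
      have h3 : (iso ⟨k, hk⟩ : ℤ) < iso ⟨k + 1, hj⟩ := by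
        exact_mod_cast iso.strictMono h2
      push_cast
      push_cast at h1
      omega
  set e : ℕ → ℤ := fun n => if h : n + 1 ≤ N then (iso ⟨N - (n + 1), by omega⟩ : ℤ)
    else -(n : ℤ) - 1 with he
  have hetail : ∀ n, N ≤ n → e n = -(n : ℤ) - 1 := by
    intro n hn
    rw [he]
    simp only
    rw [dif_neg (by omega)]
  have helow : ∀ n : ℕ, -(n : ℤ) - 1 ≤ e n := by
    intro n
    by_cases h : n + 1 ≤ N
    · have h0 : 0 < N := by omega
      have hj : N - (n + 1) < N := by omega
      have h1 := hisolin (N - (n + 1)) hj h0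
      have h2 : -(N : ℤ) ≤ (iso ⟨0, h0⟩ : ℤ) := hge _ (hmemF _)
      rw [he]
      simp only
      rw [dif_pos h]
      have : ((N - (n + 1) : ℕ) : ℤ) = (N : ℤ) - (n + 1) := by push_cast [h]; ring
      omega
    · rw [he]; simp only; rw [dif_neg h]
  have heanti : StrictAnti e := by
    apply strictAnti_nat_of_succ_lt
    intro n
    by_cases h2 : n + 2 ≤ N
    · have h1 : n + 1 ≤ N := by omega
      rw [he]
      simp only
      rw [dif_pos h1, dif_pos h2]
      have : (⟨N - (n + 2), by omega⟩ : Fin N) < ⟨N - (n + 1), by omega⟩ := by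
        simp [Fin.lt_def]; omega
      exact_mod_cast iso.strictMono this
    · by_cases h1 : n + 1 ≤ N
      · have hge0 : -(N : ℤ) ≤ e n := by
          rw [he]; simp only; rw [dif_pos h1]
          exact hge _ (hmemF _)
        have := hetail (n + 1) (by omega)
        push_cast at this
        omega
      · have ha := hetail n (by omega)
        have hb := hetail (n + 1) (by omega)
        push_cast at hb
        omega
  set f : ℕ → ℕ := fun n => (e n + n + 1).toNat with hf
  have hfcast : ∀ n, (f n : ℤ) = e n + n + 1 := by
    intro n
    rw [hf]
    simp only
    rw [Int.toNat_of_nonneg]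
    have := helow n
    omega
  have hfanti : ∀ ⦃i j : ℕ⦄, i ≤ j → f j ≤ f i := by
    have : Antitone (fun n => e n + n + 1) := by
      apply antitone_nat_of_succ_le
      intro n
      have h9 := heanti (show n < n + 1 by omega)
      push_cast
      omega
    intro i j hij
    have h1 := this hij
    simp only at h1
    have h2 := hfcast i
    have h3 := hfcast j
    omega
  have hfzero : ∀ n, N ≤ n → f n = 0 := by
    intro n hn
    have h1 := hfcast n
    have h2 := hetail n hn
    omega
  set parts : ℕ →₀ ℕ := Finsupp.onFinset (Finset.range N) f
    (fun n hn => Finset.mem_range.2 (by by_contra hc; exact hn (hfzero n (by omega)))) with hparts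
  have hpa : ∀ n, parts n = f n := fun n => rfl
  set p : PartitionSeq := ⟨parts, fun i j hij => hfanti hij⟩ with hp
  have hbeta : ∀ n, betaF p n = e n := by
    intro n
    simp only [betaF, hp, hpa]
    have := hfcast n
    omega
  refine ⟨p, ?_⟩
  rw [betaSet_eq]
  ext x
  simp only [Set.mem_range, Set.mem_union, Finset.mem_coe, Set.mem_setOf_eq]
  constructor
  · rintro ⟨n, rfl⟩
    rw [hbeta]
    by_cases h : n + 1 ≤ N
    · left
      rw [he]; simp only; rw [dif_pos h]
      exact hmemF _
    · right
      rw [hetail n (by omega)]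
      omega
  · rintro (hx | hx)
    · obtain ⟨j, hj⟩ := iso.surjective ⟨x, hx⟩
      refine ⟨N - 1 - j.val, ?_⟩
      have hjN : j.val < N := j.2
      have h1 : N - 1 - j.val + 1 ≤ N := by omega
      rw [hbeta, he]
      simp only
      rw [dif_pos h1]
      have : (⟨N - (N - 1 - j.val + 1), by omega⟩ : Fin N) = j := by
        apply Fin.ext
        simp only
        omega
      rw [this, hj]
    · refine ⟨(-x - 1).toNat, ?_⟩
      have h1 : (N : ℤ) ≤ -x - 1 := by omega
      have h2 : ((-x - 1).toNat : ℤ) = -x - 1 := Int.toNat_of_nonneg (by omega)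
      have h3 : N ≤ (-x - 1).toNat := by omega
      rw [hbeta, hetail _ h3]
      omega

/-- a bound criterion from window containment -/
lemma bnd_of_subset (m : PartitionSeq) (N : ℕ) (F : Finset ℤ) (hcard : F.card ≤ N)
    (hsub : ∀ x ∈ m.betaSet, -(N : ℤ) ≤ x → x ∈ F) : Bnd m N := by
  intro r hr
  by_contra hp
  have hbr : -(r : ℤ) ≤ betaF m r := by
    simp only [betaF]; omega
  set G : Finset ℤ := (Finset.range (r + 1)).image (betaF m) with hG
  have hGcard : G.card = r + 1 := by
    rw [hG, Finset.card_image_of_injective _ (betaF_strictAnti m).injective,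
      Finset.card_range]
  have hsubG : G ⊆ Finset.Ico (-(r : ℤ)) (-(N : ℤ)) ∪ F := by
    intro x hx
    rw [hG, Finset.mem_image] at hx
    obtain ⟨j, hj, rfl⟩ := hx
    rw [Finset.mem_range] at hj
    have hxr : betaF m r ≤ betaF m j := (betaF_strictAnti m).antitone (by omega)
    rw [Finset.mem_union]
    have hmem : betaF m j ∈ m.betaSet := by rw [betaSet_eq]; exact ⟨j, rfl⟩
    by_cases hc : -(N : ℤ) ≤ betaF m j
    · exact Or.inr (hsub _ hmem hc)
    · exact Or.inl (Finset.mem_Ico.2 ⟨by omega, by omega⟩)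
  have h1 := Finset.card_le_card hsubG
  have h2 := Finset.card_union_le (Finset.Ico (-(r : ℤ)) (-(N : ℤ))) F
  have h3 : (Finset.Ico (-(r : ℤ)) (-(N : ℤ))).card = r - N := by
    rw [Int.card_Ico]
    omega
  omega

/-- residue count in a finset -/
noncomputable def cntW (h : ℕ) (F : Finset ℤ) (i : ℤ) : ℕ :=
  (F.filter (fun x => x % (h : ℤ) = i)).card

lemma step (h : ℕ) (hh : 0 < h) (l m : PartitionSeq) (hlm : RemoveHook h l m) (N : ℕ)
    (hN : Bnd l N) :
    Bnd m N ∧ l.size = m.size + h ∧ ∀ i : ℤ, cntW h (Win l N) i = cntW h (Win m N) i := by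
  classical
  obtain ⟨b, hb, hbh, hm⟩ := hlm
  have hblow : -(N : ℤ) ≤ b - (h : ℤ) := by
    by_contra hc
    exact hbh (low_mem hN (by omega))
  have hh0 : (0 : ℤ) ≤ (h : ℤ) := by positivity
  have hbW : b ∈ Win l N := (mem_win hN).2 ⟨hb, by omega⟩
  have hbhW : b - (h : ℤ) ∉ Win l N := fun hc => hbh ((mem_win hN).1 hc).1
  set F := insert (b - (h : ℤ)) ((Win l N).erase b) with hF
  have hbhe : b - (h : ℤ) ∉ (Win l N).erase b := fun hc => hbhW (Finset.mem_of_mem_erase hc)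
  have hNpos : 0 < N := by
    have := win_card l N
    have := Finset.card_pos.2 ⟨b, hbW⟩
    omega
  have hFcard : F.card = N := by
    rw [hF, Finset.card_insert_of_notMem hbhe, Finset.card_erase_of_mem hbW, win_card]
    omega
  have hBndm : Bnd m N := by
    apply bnd_of_subset m N F (le_of_eq hFcard)
    intro x hx hxge
    rw [hm] at hx
    rcases hx with rfl | ⟨hxl, hxb⟩
    · exact Finset.mem_insert_self _ _
    · exact Finset.mem_insert_of_mem (Finset.mem_erase.2 ⟨hxb, (mem_win hN).2 ⟨hxl, hxge⟩⟩)
  have hWm : Win m N = F := by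
    apply Finset.coe_injective
    rw [win_coe hBndm, hm, hF]
    ext x
    simp only [Set.mem_inter_iff, Set.mem_insert_iff, Set.mem_diff, Set.mem_singleton_iff,
      Set.mem_setOf_eq, Finset.coe_insert, Finset.coe_erase, Finset.mem_coe]
    constructor
    · rintro ⟨(rfl | ⟨hxl, hxb⟩), hxge⟩
      · exact Or.inl rfl
      · exact Or.inr ⟨(mem_win hN).2 ⟨hxl, hxge⟩, hxb⟩
    · rintro (rfl | ⟨hxW, hxb⟩)
      · exact ⟨Or.inl rfl, hblow⟩
      · have h9 := (mem_win hN).1 hxW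
        exact ⟨Or.inr ⟨h9.1, hxb⟩, h9.2⟩
  have hsum : (Win m N).sum id = (Win l N).sum id - (h : ℤ) := by
    rw [hWm, hF, Finset.sum_insert hbhe, Finset.sum_erase_eq_sub hbW]
    simp only [id]
    ring
  have hsz : l.size = m.size + h := by
    have h1 := size_win hN
    have h2 := size_win hBndm
    rw [hsum] at h2
    omega
  refine ⟨hBndm, hsz, fun i => ?_⟩
  have hres : (b - (h : ℤ)) % (h : ℤ) = b % (h : ℤ) := by
    rw [show b - (h : ℤ) = b + (h : ℤ) * (-1) by ring, Int.add_mul_emod_self_left]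
  unfold cntW
  rw [hWm, hF, Finset.filter_insert, Finset.filter_erase]
  by_cases hcase : b % (h : ℤ) = i
  · rw [if_pos (by rw [hres]; exact hcase)]
    have hbf : b ∈ (Win l N).filter (fun x => x % (h : ℤ) = i) :=
      Finset.mem_filter.2 ⟨hbW, hcase⟩
    have hbhf : b - (h : ℤ) ∉ ((Win l N).filter (fun x => x % (h : ℤ) = i)).erase b :=
      fun hc => hbhW (Finset.filter_subset _ _ (Finset.mem_of_mem_erase hc))
    rw [Finset.card_insert_of_notMem hbhf, Finset.card_erase_of_mem hbf]
    have := Finset.card_pos.2 ⟨b, hbf⟩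
    omega
  · rw [if_neg (by rw [hres]; exact hcase)]
    have h9 : ((Win l N).filter (fun x => x % (h : ℤ) = i)).erase b =
        (Win l N).filter (fun x => x % (h : ℤ) = i) :=
      Finset.erase_eq_of_notMem (fun hc => hcase (Finset.mem_filter.1 hc).2)
    rw [h9]

lemma chain (h : ℕ) (hh : 0 < h) (l c : PartitionSeq)
    (hlc : Relation.ReflTransGen (RemoveHook h) l c) (N : ℕ) (hN : Bnd l N) :
    Bnd c N ∧ ∃ k, l.size = c.size + h * k ∧
      ∀ i : ℤ, cntW h (Win l N) i = cntW h (Win c N) i := by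
  revert hN
  induction hlc using Relation.ReflTransGen.head_induction_on with
  | refl => exact fun hN => ⟨hN, 0, by omega, fun i => rfl⟩
  | head hab hbc ih =>
    intro hN
    obtain ⟨hBb, hsz, hcnt⟩ := step h hh _ _ hab N hN
    obtain ⟨hBc, k, hk, hkc⟩ := ih hBb
    refine ⟨hBc, k + 1, ?_, fun i => (hcnt i).trans (hkc i)⟩
    have : h * (k + 1) = h * k + h := by ring
    omega

lemma core_downclosed (h : ℕ) (hh : 0 < h) (c : PartitionSeq) (hc : IsCore h c) :
    ∀ b ∈ c.betaSet, b - (h : ℤ) ∈ c.betaSet := by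
  classical
  intro b hb
  by_contra hbh
  obtain ⟨N₀, hN₀⟩ := bnd_exists c
  set N := N₀ + h + b.natAbs with hN
  have hBnd : Bnd c N := bnd_mono hN₀ (by omega)
  have habs : -|b| ≤ b := neg_abs_le b
  have hblow : -(N : ℤ) ≤ b - (h : ℤ) := by
    rw [hN]; push_cast; omega
  have hh0 : (0 : ℤ) ≤ (h : ℤ) := by positivity
  have hbW : b ∈ Win c N := (mem_win hBnd).2 ⟨hb, by omega⟩
  have hbge := ((mem_win hBnd).1 hbW).2
  have hbhW : b - (h : ℤ) ∉ Win c N := fun hc' => hbh ((mem_win hBnd).1 hc').1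
  set F := insert (b - (h : ℤ)) ((Win c N).erase b) with hF
  have hbhe : b - (h : ℤ) ∉ (Win c N).erase b := fun hc' => hbhW (Finset.mem_of_mem_erase hc')
  have hNpos : 0 < N := by
    have := win_card c N
    have := Finset.card_pos.2 ⟨b, hbW⟩
    omega
  have hFcard : F.card = N := by
    rw [hF, Finset.card_insert_of_notMem hbhe, Finset.card_erase_of_mem hbW, win_card]
    omega
  have hFge : ∀ x ∈ F, -(N : ℤ) ≤ x := by
    intro x hx
    rw [hF, Finset.mem_insert] at hx
    rcases hx with rfl | hx
    · exact hblow
    · exact ((mem_win hBnd).1 (Finset.mem_of_mem_erase hx)).2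
  obtain ⟨p, hp⟩ := exists_partition N F hFcard hFge
  apply hc p
  refine ⟨b, hb, hbh, ?_⟩
  rw [hp, hF]
  ext x
  simp only [Set.mem_union, Set.mem_insert_iff, Finset.coe_insert, Finset.coe_erase,
    Set.mem_diff, Finset.mem_coe, Set.mem_setOf_eq, Set.mem_singleton_iff]
  constructor
  · rintro ((rfl | ⟨hxW, hxb⟩) | hxlow)
    · exact Or.inl rfl
    · exact Or.inr ⟨((mem_win hBnd).1 hxW).1, hxb⟩
    · refine Or.inr ⟨low_mem hBnd hxlow, ?_⟩
      intro hxe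
      rw [hxe] at hxlow
      omega
  · rintro (rfl | ⟨hxβ, hxb⟩)
    · exact Or.inl (Or.inl rfl)
    · by_cases hxge : -(N : ℤ) ≤ x
      · exact Or.inl (Or.inr ⟨(mem_win hBnd).2 ⟨hxβ, hxge⟩, hxb⟩)
      · exact Or.inr (by omega)

lemma downclosed_range (J : Finset ℕ) (hJ : ∀ j, j + 1 ∈ J → j ∈ J) :
    J = Finset.range J.card := by
  have hdown : ∀ d j, j + d ∈ J → j ∈ J := by
    intro d
    induction d with
    | zero => intro j hj; simpa using hj
    | succ k ih =>
      intro j hj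
      apply ih j
      apply hJ
      have : j + k + 1 = j + (k + 1) := by omega
      rwa [this]
  have hlt : ∀ j ∈ J, j < J.card := by
    intro j hj
    have hsub : Finset.range (j + 1) ⊆ J := by
      intro i hi
      rw [Finset.mem_range] at hi
      apply hdown (j - i) i
      have : i + (j - i) = j := by omega
      rwa [this]
    have := Finset.card_le_card hsub
    rw [Finset.card_range] at this
    omega
  apply Finset.eq_of_subset_of_card_le
  · exact fun j hj => Finset.mem_range.2 (hlt j hj)
  · rw [Finset.card_range]

lemma class_filter_core (h : ℕ) (hh : 0 < h) (c : PartitionSeq) (N : ℕ) (hBnd : Bnd c N)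
    (hdc : ∀ b ∈ c.betaSet, b - (h : ℤ) ∈ c.betaSet) (x : ℤ) :
    (Win c N).filter (fun v => v % (h : ℤ) = x % (h : ℤ)) =
      (Finset.range (cntW h (Win c N) (x % (h : ℤ)))).image
        (fun j : ℕ => (-(N : ℤ) + (x + N) % (h : ℤ)) + (h : ℤ) * j) := by
  classical
  have hhz : (0 : ℤ) < (h : ℤ) := by exact_mod_cast hh
  set rmin : ℤ := -(N : ℤ) + (x + N) % (h : ℤ) with hrmin
  set g : ℕ → ℤ := fun j : ℕ => rmin + (h : ℤ) * j with hg
  set A : Finset ℤ := (Win c N).filter (fun v => v % (h : ℤ) = x % (h : ℤ)) with hA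
  have hr1 : 0 ≤ (x + N) % (h : ℤ) := Int.emod_nonneg _ (by omega)
  have hr2 : (x + N) % (h : ℤ) < (h : ℤ) := Int.emod_lt_of_pos _ hhz
  have hrres : rmin % (h : ℤ) = x % (h : ℤ) := by
    rw [hrmin, Int.add_emod, Int.emod_emod_of_dvd _ dvd_rfl, ← Int.add_emod]
    congr 1
    ring
  have hginj : Function.Injective g := by
    intro a b hab
    rw [hg] at hab
    simp only at hab
    have : (h : ℤ) * a = (h : ℤ) * b := by omega
    have := mul_left_cancel₀ (ne_of_gt hhz) this
    exact_mod_cast this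
  have hgres : ∀ j, g j % (h : ℤ) = x % (h : ℤ) := by
    intro j
    rw [hg]
    simp only
    rw [Int.add_mul_emod_self_left]
    exact hrres
  have hgge : ∀ j : ℕ, -(N : ℤ) ≤ g j := by
    intro j
    rw [hg]
    simp only
    have h1 : (0 : ℤ) ≤ (h : ℤ) * j := by positivity
    omega
  have hmemA : ∀ a, a ∈ A ↔ (a ∈ c.betaSet ∧ -(N : ℤ) ≤ a ∧ a % (h : ℤ) = x % (h : ℤ)) := by
    intro a
    rw [hA, Finset.mem_filter, mem_win hBnd]
    tauto
  have hWle : ∀ a ∈ c.betaSet, a ≤ (c.parts 0 : ℤ) - 1 := by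
    intro a ha
    rw [betaSet_eq] at ha
    obtain ⟨r, rfl⟩ := ha
    have := c.antitone (Nat.zero_le r)
    simp only [betaF]
    have : (c.parts r : ℤ) ≤ (c.parts 0 : ℤ) := by exact_mod_cast this
    omega
  set Bb := N + c.parts 0 + 1 with hBb
  have hAg : ∀ a ∈ A, ∃ j, j < Bb ∧ g j = a := by
    intro a ha
    rw [hmemA] at ha
    obtain ⟨haβ, hage, hares⟩ := ha
    have hmod : rmin % (h : ℤ) = a % (h : ℤ) := by rw [hares, hrres]
    have hdvd : (h : ℤ) ∣ (a - rmin) := Int.ModEq.dvd hmod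
    have hposd : 0 ≤ a - rmin := by
      obtain ⟨q, hq⟩ := hdvd
      have hgt : a - rmin > -(h : ℤ) := by omega
      have hq' : 0 ≤ q := by nlinarith
      nlinarith
    have hjge : 0 ≤ (a - rmin) / (h : ℤ) := Int.ediv_nonneg hposd (le_of_lt hhz)
    have hmul : (h : ℤ) * ((a - rmin) / (h : ℤ)) = a - rmin := Int.mul_ediv_cancel' hdvd
    have hjle : (a - rmin) / (h : ℤ) ≤ a - rmin := by nlinarith
    have hle := hWle a haβ
    have hcast : (((a - rmin) / (h : ℤ)).toNat : ℤ) = (a - rmin) / (h : ℤ) :=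
      Int.toNat_of_nonneg hjge
    refine ⟨((a - rmin) / (h : ℤ)).toNat, ?_, ?_⟩
    · rw [hBb]
      have : (0 : ℤ) ≤ (x + N) % (h : ℤ) := hr1
      omega
    · rw [hg]
      simp only
      rw [hcast, hmul]
      ring
  set J := (Finset.range Bb).filter (fun j => g j ∈ A) with hJ
  have hAJ : A = J.image g := by
    ext a
    constructor
    · intro ha
      obtain ⟨j, hjB, hje⟩ := hAg a ha
      exact Finset.mem_image.2 ⟨j, Finset.mem_filter.2
        ⟨Finset.mem_range.2 hjB, by rw [hje]; exact ha⟩, hje⟩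
    · intro ha
      obtain ⟨j, hj, rfl⟩ := Finset.mem_image.1 ha
      exact (Finset.mem_filter.1 hj).2
  have hJdown : ∀ j, j + 1 ∈ J → j ∈ J := by
    intro j hj
    have hj1 : g (j + 1) ∈ A := (Finset.mem_filter.1 hj).2
    rw [hmemA] at hj1
    have hstep2 : g j = g (j + 1) - (h : ℤ) := by rw [hg]; push_cast; ring
    have hgβ : g j ∈ c.betaSet := by rw [hstep2]; exact hdc _ hj1.1
    have hmem : g j ∈ A := (hmemA _).2 ⟨hgβ, hgge j, hgres j⟩
    refine Finset.mem_filter.2 ⟨Finset.mem_range.2 ?_, hmem⟩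
    have := (Finset.mem_filter.1 hj).1
    rw [Finset.mem_range] at this
    omega
  have hJr : J = Finset.range J.card := downclosed_range J hJdown
  have hcardA : A.card = J.card := by
    rw [hAJ, Finset.card_image_of_injective _ hginj]
  have hfin : A = (Finset.range J.card).image g := by
    rw [← hJr]
    exact hAJ
  rw [← hcardA] at hfin
  have hcnt : cntW h (Win c N) (x % (h : ℤ)) = A.card := rfl
  rw [hcnt]
  exact hfin

lemma core_win_eq (h : ℕ) (hh : 0 < h) (c1 c2 : PartitionSeq) (N : ℕ)
    (h1 : Bnd c1 N) (h2 : Bnd c2 N)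
    (d1 : ∀ b ∈ c1.betaSet, b - (h : ℤ) ∈ c1.betaSet)
    (d2 : ∀ b ∈ c2.betaSet, b - (h : ℤ) ∈ c2.betaSet)
    (hcnt : ∀ i : ℤ, cntW h (Win c1 N) i = cntW h (Win c2 N) i) :
    Win c1 N = Win c2 N := by
  ext x
  have e1 := class_filter_core h hh c1 N h1 d1 x
  have e2 := class_filter_core h hh c2 N h2 d2 x
  rw [hcnt (x % (h : ℤ))] at e1
  have e3 : (Win c1 N).filter (fun v => v % (h : ℤ) = x % (h : ℤ)) =
      (Win c2 N).filter (fun v => v % (h : ℤ) = x % (h : ℤ)) := e1.trans e2.symm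
  constructor
  · intro hx
    have h9 : x ∈ (Win c1 N).filter (fun v => v % (h : ℤ) = x % (h : ℤ)) :=
      Finset.mem_filter.2 ⟨hx, rfl⟩
    rw [e3] at h9
    exact (Finset.mem_filter.1 h9).1
  · intro hx
    have h9 : x ∈ (Win c2 N).filter (fun v => v % (h : ℤ) = x % (h : ℤ)) :=
      Finset.mem_filter.2 ⟨hx, rfl⟩
    rw [← e3] at h9
    exact (Finset.mem_filter.1 h9).1

lemma core_size_eq (h : ℕ) (hh : 0 < h) (l c1 c2 : PartitionSeq)
    (hc1 : HasCore h l c1) (hc2 : HasCore h l c2) : c1.size = c2.size := by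
  obtain ⟨N, hN⟩ := bnd_exists l
  obtain ⟨hB1, k1, hk1, hcnt1⟩ := chain h hh l c1 hc1.1 N hN
  obtain ⟨hB2, k2, hk2, hcnt2⟩ := chain h hh l c2 hc2.1 N hN
  have hcnt : ∀ i, cntW h (Win c1 N) i = cntW h (Win c2 N) i :=
    fun i => (hcnt1 i).symm.trans (hcnt2 i)
  have hw := core_win_eq h hh c1 c2 N hB1 hB2 (core_downclosed h hh c1 hc1.2)
    (core_downclosed h hh c2 hc2.2) hcnt
  have s1 := size_win hB1
  have s2 := size_win hB2
  rw [hw] at s1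
  omega

lemma hascore_size (h : ℕ) (hh : 0 < h) (l c : PartitionSeq) (hc : HasCore h l c) :
    ∃ k, l.size = c.size + h * k := by
  obtain ⟨N, hN⟩ := bnd_exists l
  obtain ⟨-, k, hk, -⟩ := chain h hh l c hc.1 N hN
  exact ⟨k, hk⟩

lemma main_aux (s t : ℕ) (hs : 1 < s) (ht : 1 < t) (hst : Nat.Coprime s t)
    (l μ σ τ : PartitionSeq) (hlσ : HasCore s l σ) (hlτ : HasCore t l τ)
    (hμσ : HasCore s μ σ) (hμτ : HasCore t μ τ)
    (c : PartitionSeq) (hc : HasCore s l c) (hsz : l.size < c.size + s * t) :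
    l.size ≤ μ.size := by
  have hs0 : 0 < s := by omega
  have ht0 : 0 < t := by omega
  obtain ⟨a, ha⟩ := hascore_size s hs0 l σ hlσ
  obtain ⟨a', ha'⟩ := hascore_size s hs0 μ σ hμσ
  obtain ⟨b, hb⟩ := hascore_size t ht0 l τ hlτ
  obtain ⟨b', hb'⟩ := hascore_size t ht0 μ τ hμτ
  have hcσ : c.size = σ.size := core_size_eq s hs0 l c σ hc hlσ
  have hat : a < t := by
    rw [hcσ, ha] at hsz
    have h9 : s * a < s * t := by linarith
    exact Nat.lt_of_mul_lt_mul_left h9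
  by_contra hlt
  push_neg at hlt
  have haa : a' < a := by
    have h9 : s * a' < s * a := by rw [ha] at hlt; rw [ha'] at hlt; linarith
    exact Nat.lt_of_mul_lt_mul_left h9
  have hbb : b' < b := by
    have h9 : t * b' < t * b := by rw [hb] at hlt; rw [hb'] at hlt; linarith
    exact Nat.lt_of_mul_lt_mul_left h9
  have hd1 : l.size = μ.size + s * (a - a') := by
    have h9 : a = a' + (a - a') := by omega
    rw [ha, h9, Nat.mul_add, ha', Nat.add_sub_cancel_left]
    ring
  have hd2 : l.size = μ.size + t * (b - b') := by
    have h9 : b = b' + (b - b') := by omega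
    rw [hb, h9, Nat.mul_add, hb', Nat.add_sub_cancel_left]
    ring
  have heq : s * (a - a') = t * (b - b') := Nat.add_left_cancel (hd1.symm.trans hd2)
  have htdvd : t ∣ (a - a') := by
    apply Nat.Coprime.dvd_of_dvd_mul_left hst.symm
    exact ⟨b - b', heq⟩
  have := Nat.le_of_dvd (by omega) htdvd
  omega

end StmtNine

/-- a partition with `s`-weight `< t` or `t`-weight `< s` is
`(s,t)`-minimal. -/
theorem stmt9 (s t : ℕ) (hs : 1 < s) (ht : 1 < t) (hst : Nat.Coprime s t)
    (l : PartitionSeq)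
    (hw : (∃ c : PartitionSeq, PartitionSeq.HasCore s l c ∧ l.size < c.size + s * t) ∨
          (∃ c : PartitionSeq, PartitionSeq.HasCore t l c ∧ l.size < c.size + t * s)) :
    ∀ (μ σ τ : PartitionSeq), PartitionSeq.HasCore s l σ → PartitionSeq.HasCore t l τ →
      PartitionSeq.HasCore s μ σ → PartitionSeq.HasCore t μ τ → l.size ≤ μ.size := by
  intro μ σ τ hlσ hlτ hμσ hμτ
  rcases hw with ⟨c, hc, hsz⟩ | ⟨c, hc, hsz⟩
  · exact StmtNine.main_aux s t hs ht hst l μ σ τ hlσ hlτ hμσ hμτ c hc hsz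
  · exact StmtNine.main_aux t s ht hs hst.symm l μ τ σ hlτ hlσ hμτ hμσ c hc hsz
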